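/- Let P be an m×m real orthogonal projector (i.e., Pᵀ = P and P² = P), let A be an m×n real matrix, and let q be a nonnegative integer. Then ‖P A‖ ≤ ‖P (A Aᵀ)^q A‖^{1/(2q+1)}, where ‖·‖ is the spectral norm. -/

import Mathlib

open Matrix
open scoped MatrixOrder

noncomputable def specNorm {m n : Type*} [Fintype m] [Fintype n] [DecidableEq n]
    (A : Matrix m n ℝ) : ℝ :=
  ‖LinearMap.toContinuousLinearMap (Matrix.toEuclideanLin A)‖

namespace ProjPowAux

noncomputable abbrev T {a b : ℕ} (A : Matrix (Fin a) (Fin b) ℝ) :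
    EuclideanSpace ℝ (Fin b) →L[ℝ] EuclideanSpace ℝ (Fin a) :=
  LinearMap.toContinuousLinearMap (Matrix.toEuclideanLin A)

variable {m n p : ℕ}

theorem specNorm_eq (A : Matrix (Fin m) (Fin n) ℝ) : specNorm A = ‖T A‖ := rfl

theorem conjT_eq (A : Matrix (Fin m) (Fin n) ℝ) : Aᴴ = Aᵀ := by ext i j; simp

theorem T_mul (A : Matrix (Fin m) (Fin n) ℝ) (B : Matrix (Fin n) (Fin p) ℝ) :
    T (A * B) = (T A).comp (T B) := by
  ext x i
  simp [Matrix.toEuclideanLin_apply, Matrix.mulVec_mulVec]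

theorem T_one (x : EuclideanSpace ℝ (Fin m)) : (T (1 : Matrix (Fin m) (Fin m) ℝ)) x = x := by
  ext i
  simp [Matrix.toEuclideanLin_apply]

theorem T_transpose (A : Matrix (Fin m) (Fin n) ℝ) :
    T Aᵀ = ContinuousLinearMap.adjoint (T A) := by
  rw [ContinuousLinearMap.eq_adjoint_iff]
  intro x y
  have h : Aᴴ = Aᵀ := conjT_eq A
  have h2 := Matrix.toEuclideanLin_conjTranspose_eq_adjoint A
  rw [h] at h2
  show inner ℝ ((Matrix.toEuclideanLin Aᵀ) x) y = _
  rw [h2, LinearMap.adjoint_inner_left]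
  rfl

theorem norm_T_adjoint (A : Matrix (Fin m) (Fin n) ℝ) :
    ‖ContinuousLinearMap.adjoint (T A)‖ = ‖T A‖ :=
  (ContinuousLinearMap.adjoint (𝕜 := ℝ)).norm_map (T A)

/-- `specNorm (B * Bᵀ) = specNorm B ^ 2`. -/
theorem specNorm_mul_transpose (B : Matrix (Fin m) (Fin n) ℝ) :
    specNorm (B * Bᵀ) = specNorm B ^ 2 := by
  rw [specNorm_eq, specNorm_eq, T_mul, T_transpose]
  have h := ContinuousLinearMap.norm_adjoint_comp_self
      (ContinuousLinearMap.adjoint (T B))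
  rw [ContinuousLinearMap.adjoint_adjoint] at h
  rw [h, norm_T_adjoint, sq]

theorem T_selfadj {R : Matrix (Fin m) (Fin m) ℝ} (hR : Rᵀ = R)
    (u v : EuclideanSpace ℝ (Fin m)) :
    inner ℝ ((T R) u) v = (inner ℝ u ((T R) v) : ℝ) := by
  have h : ContinuousLinearMap.adjoint (T R) = T R := by rw [← T_transpose, hR]
  conv_lhs => rw [← h]
  rw [ContinuousLinearMap.adjoint_inner_left (T R) v u, real_inner_comm]

/-- log-convexity transfer for a nonneg sequence. -/
theorem seq_aux (b : ℕ → ℝ) (hb : ∀ k, 0 ≤ b k)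
    (hconv : ∀ k, b (k+1) ^ 2 ≤ b k * b (k+2)) :
    ∀ k, b 1 * b (k+1) ≤ b 0 * b (k+2) := by
  intro k
  induction k with
  | zero =>
    have := hconv 0
    nlinarith [hb 0, hb 1, hb 2]
  | succ k ih =>
    rcases eq_or_lt_of_le (hb (k+2)) with h0 | h0
    · rw [← h0]
      nlinarith [hb 0, hb 1, hb (k+3)]
    · have h1 : b 1 * b (k+2) ^ 2 ≤ b 1 * (b (k+1) * b (k+3)) :=
        mul_le_mul_of_nonneg_left (hconv (k+1)) (hb 1)
      have h2 : b 1 * b (k+1) * b (k+3) ≤ b 0 * b (k+2) * b (k+3) :=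
        mul_le_mul_of_nonneg_right ih (hb (k+3))
      nlinarith

theorem seq_pow (b : ℕ → ℝ) (hb : ∀ k, 0 ≤ b k) (hb0 : b 0 ≤ 1)
    (hconv : ∀ k, b (k+1) ^ 2 ≤ b k * b (k+2)) :
    ∀ t, b 1 ^ (t+1) ≤ b (t+1) := by
  intro t
  induction t with
  | zero => simp
  | succ t ih =>
    have h1 : b 1 ^ (t+2) = b 1 * b 1 ^ (t+1) := by ring
    have h2 : b 1 * b 1 ^ (t+1) ≤ b 1 * b (t+1) :=
      mul_le_mul_of_nonneg_left ih (hb 1)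
    have h3 := seq_aux b hb hconv t
    have h4 : b 0 * b (t+2) ≤ 1 * b (t+2) :=
      mul_le_mul_of_nonneg_right hb0 (hb (t+2))
    rw [h1]
    nlinarith

/-- operator norm bound from the quadratic form, for PSD matrices. -/
theorem opNorm_le_of_quadform {X : Matrix (Fin m) (Fin m) ℝ} (hX : X.PosSemidef)
    {c : ℝ} (hc : 0 ≤ c)
    (h : ∀ x : EuclideanSpace ℝ (Fin m), ‖x‖ ≤ 1 → (inner ℝ x ((T X) x) : ℝ) ≤ c) :
    ‖T X‖ ≤ c := by
  set R := CFC.sqrt X with hRdef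
  have hRR : R * R = X := CFC.sqrt_mul_sqrt_self X hX.nonneg
  have hRsym : Rᵀ = R := by rw [← conjT_eq]; exact (CFC.sqrt_nonneg X).posSemidef.1
  have key : ∀ x : EuclideanSpace ℝ (Fin m), ‖(T R) x‖ ≤ Real.sqrt c * ‖x‖ := by
    intro x
    rcases eq_or_ne x 0 with rfl | hx
    · simp
    · have hxn : (0:ℝ) < ‖x‖ := norm_pos_iff.mpr hx
      set u : EuclideanSpace ℝ (Fin m) := ‖x‖⁻¹ • x with hu
      have hun : ‖u‖ ≤ 1 := by
        rw [hu, norm_smul, norm_inv, norm_norm, inv_mul_cancel₀ hxn.ne']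
      have hq : (inner ℝ u ((T X) u) : ℝ) = ‖(T R) u‖ ^ 2 := by
        rw [← hRR, T_mul, ContinuousLinearMap.comp_apply,
          ← T_selfadj hRsym, real_inner_self_eq_norm_sq]
      have h1 : ‖(T R) u‖ ^ 2 ≤ c := by rw [← hq]; exact h u hun
      have h2 : ‖(T R) u‖ ≤ Real.sqrt c := by
        rw [← Real.sqrt_sq (norm_nonneg _)]
        exact Real.sqrt_le_sqrt h1
      have h3 : (T R) x = ‖x‖ • (T R) u := by
        rw [hu, ContinuousLinearMap.map_smul, smul_smul, mul_inv_cancel₀ hxn.ne', one_smul]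
      rw [h3, norm_smul, norm_norm, mul_comm]
      exact mul_le_mul_of_nonneg_right h2 hxn.le
  have hTX : T X = (ContinuousLinearMap.adjoint (T R)).comp (T R) := by
    rw [← T_transpose, hRsym, ← T_mul, hRR]
  rw [hTX, ContinuousLinearMap.norm_adjoint_comp_self]
  have hn : ‖T R‖ ≤ Real.sqrt c :=
    ContinuousLinearMap.opNorm_le_bound _ (Real.sqrt_nonneg c) key
  calc ‖T R‖ * ‖T R‖ ≤ Real.sqrt c * Real.sqrt c :=
        mul_le_mul hn hn (norm_nonneg _) (Real.sqrt_nonneg c)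
    _ = c := Real.mul_self_sqrt hc

theorem rpow_root_le {u v : ℝ} {t : ℕ} (ht : t ≠ 0) (hu : 0 ≤ u) (h : u ^ t ≤ v) :
    u ≤ v ^ ((1:ℝ)/(t:ℝ)) := by
  have ht' : (0:ℝ) < (t:ℝ) := by positivity
  have h1 : u = (u ^ t) ^ ((1:ℝ)/(t:ℝ)) := by
    rw [← Real.rpow_natCast u t, ← Real.rpow_mul hu]
    rw [mul_one_div, div_self ht'.ne', Real.rpow_one]
  rw [h1]
  exact Real.rpow_le_rpow (by positivity) h (by positivity)

/-- a projector contracts norms. -/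
theorem proj_contract {P : Matrix (Fin m) (Fin m) ℝ} (hPsymm : Pᵀ = P)
    (hPidem : P * P = P) (x : EuclideanSpace ℝ (Fin m)) : ‖(T P) x‖ ≤ ‖x‖ := by
  have h : ‖(T P) x‖ ^ 2 = (inner ℝ x ((T P) x) : ℝ) := by
    rw [← real_inner_self_eq_norm_sq, T_selfadj hPsymm,
      ← ContinuousLinearMap.comp_apply, ← T_mul, hPidem]
  have h2 : (inner ℝ x ((T P) x) : ℝ) ≤ ‖x‖ * ‖(T P) x‖ := real_inner_le_norm _ _
  rcases eq_or_lt_of_le (norm_nonneg ((T P) x)) with h0 | h0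
  · rw [← h0]; exact norm_nonneg x
  · nlinarith

end ProjPowAux

set_option maxHeartbeats 1000000 in
open ProjPowAux in
/-- for an orthogonal projector `P`,
`‖P A‖ ≤ ‖P (A Aᵀ)^q A‖^(1/(2q+1))`. -/
theorem projector_power_norm_le {m n : ℕ}
    (P : Matrix (Fin m) (Fin m) ℝ) (hPsymm : Pᵀ = P) (hPidem : P * P = P)
    (A : Matrix (Fin m) (Fin n) ℝ) (q : ℕ) :
    specNorm (P * A) ≤
      specNorm (P * (A * Aᵀ) ^ q * A) ^ ((1 : ℝ) / (2 * (q : ℝ) + 1)) := by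
  set M : Matrix (Fin m) (Fin m) ℝ := A * Aᵀ with hMdef
  set t : ℕ := 2 * q + 1 with htdef
  have hM : M.PosSemidef := by
    rw [hMdef, ← conjT_eq]; exact posSemidef_self_mul_conjTranspose A
  have hMsym : Mᵀ = M := by rw [hMdef, transpose_mul, transpose_transpose]
  -- Gram identities
  have hBB : (P * A) * (P * A)ᵀ = P * M * P := by
    rw [transpose_mul, hPsymm, hMdef]
    simp only [Matrix.mul_assoc]
  have hCC : (P * M ^ q * A) * (P * M ^ q * A)ᵀ = P * M ^ t * P := by
    rw [transpose_mul, transpose_mul, transpose_pow, hMsym, hPsymm]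
    have hpow : M ^ t = (M ^ q * M) * M ^ q := by
      rw [← pow_succ, ← pow_add, htdef]; ring_nf
    rw [hpow, hMdef]
    simp only [Matrix.mul_assoc]
  -- PSD of P M P
  have hPMP : (P * M * P).PosSemidef := by
    have := hM.mul_mul_conjTranspose_same P
    rwa [conjT_eq, hPsymm] at this
  have ht0 : t ≠ 0 := by omega
  have hKnonneg : (0:ℝ) ≤ ‖T (P * M ^ t * P)‖ := norm_nonneg _
  -- square root of M
  set R : Matrix (Fin m) (Fin m) ℝ := CFC.sqrt M with hRdef
  have hRR : R * R = M := CFC.sqrt_mul_sqrt_self M hM.nonneg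
  have hRsym : Rᵀ = R := by rw [← conjT_eq]; exact (CFC.sqrt_nonneg M).posSemidef.1
  -- key norm bound : ‖T (P*M*P)‖ ≤ ‖T (P*M^t*P)‖ ^ (1/t)
  have key : ‖T (P * M * P)‖ ≤ ‖T (P * M ^ t * P)‖ ^ ((1:ℝ)/(t:ℝ)) := by
    apply opNorm_le_of_quadform hPMP (by positivity)
    intro x hx
    set y : EuclideanSpace ℝ (Fin m) := (T P) x with hy
    have hy1 : ‖y‖ ≤ 1 := le_trans (proj_contract hPsymm hPidem x) hx
    set b : ℕ → ℝ := fun k => ‖(T (R ^ k)) y‖ with hb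
    have hbnn : ∀ k, 0 ≤ b k := fun k => norm_nonneg _
    have hb0 : b 0 ≤ 1 := by
      have : b 0 = ‖y‖ := by rw [hb]; simp only [pow_zero, T_one]
      rw [this]; exact hy1
    have hstep : ∀ k, (T (R ^ (k+1))) y = (T R) ((T (R ^ k)) y) := by
      intro k
      rw [pow_succ', T_mul, ContinuousLinearMap.comp_apply]
    have hconv : ∀ k, b (k+1) ^ 2 ≤ b k * b (k+2) := by
      intro k
      have e1 : b (k+1) ^ 2 = (inner ℝ ((T (R^(k+1))) y) ((T (R^(k+1))) y) : ℝ) :=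
        (real_inner_self_eq_norm_sq _).symm
      have e2 : (inner ℝ ((T (R^(k+1))) y) ((T (R^(k+1))) y) : ℝ)
          = (inner ℝ ((T (R^k)) y) ((T (R^(k+2))) y) : ℝ) := by
        conv_lhs => rw [hstep k]
        rw [T_selfadj hRsym, ← hstep k, ← hstep (k+1)]
      rw [e1, e2]
      exact le_trans (real_inner_le_norm _ _) (le_refl _)
    -- quadratic forms
    have hq1 : (inner ℝ x ((T (P * M * P)) x) : ℝ) = b 1 ^ 2 := by
      rw [T_mul, T_mul, ContinuousLinearMap.comp_apply, ContinuousLinearMap.comp_apply,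
        ← T_selfadj hPsymm]
      show (inner ℝ ((T P) x) ((T M) ((T P) x)) : ℝ) = _
      rw [← hy, ← hRR, T_mul, ContinuousLinearMap.comp_apply, ← T_selfadj hRsym,
        real_inner_self_eq_norm_sq, hb]
      simp only [pow_one]
    have hMt : M ^ t = R ^ t * R ^ t := by
      rw [← hRR, ← sq, ← pow_mul, two_mul, pow_add]
    have hq2 : (inner ℝ x ((T (P * M ^ t * P)) x) : ℝ) = b t ^ 2 := by
      rw [T_mul, T_mul, ContinuousLinearMap.comp_apply, ContinuousLinearMap.comp_apply,
        ← T_selfadj hPsymm]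
      show (inner ℝ ((T P) x) ((T (M ^ t)) ((T P) x)) : ℝ) = _
      rw [← hy, hMt, T_mul, ContinuousLinearMap.comp_apply]
      have hTt : Rᵀ ^ t = R ^ t := by rw [hRsym]
      have hsa : ∀ u v : EuclideanSpace ℝ (Fin m),
          inner ℝ ((T (R ^ t)) u) v = (inner ℝ u ((T (R ^ t)) v) : ℝ) := by
        intro u v
        exact T_selfadj (by rw [transpose_pow, hRsym]) u v
      rw [← hsa, real_inner_self_eq_norm_sq]
    -- Jensen via the sequence lemma
    have hJ : b 1 ^ t ≤ b t := by
      have := seq_pow b hbnn hb0 hconv (2 * q)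
      simpa [htdef] using this
    have hCS : (inner ℝ x ((T (P * M ^ t * P)) x) : ℝ) ≤ ‖T (P * M ^ t * P)‖ := by
      have h1 : (inner ℝ x ((T (P * M ^ t * P)) x) : ℝ)
          ≤ ‖x‖ * ‖(T (P * M ^ t * P)) x‖ := real_inner_le_norm _ _
      have h2 : ‖(T (P * M ^ t * P)) x‖ ≤ ‖T (P * M ^ t * P)‖ * ‖x‖ :=
        ContinuousLinearMap.le_opNorm _ _
      have h3 : ‖x‖ * ‖x‖ ≤ 1 := by nlinarith [norm_nonneg x]
      nlinarith [norm_nonneg x, hKnonneg, norm_nonneg ((T (P * M ^ t * P)) x)]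
    -- conclude
    have hpow : (inner ℝ x ((T (P * M * P)) x) : ℝ) ^ t ≤ ‖T (P * M ^ t * P)‖ := by
      rw [hq1, ← pow_mul, mul_comm 2 t, pow_mul]
      calc (b 1 ^ t) ^ 2 ≤ b t ^ 2 :=
            pow_le_pow_left₀ (by positivity) hJ 2
        _ = (inner ℝ x ((T (P * M ^ t * P)) x) : ℝ) := hq2.symm
        _ ≤ _ := hCS
    exact rpow_root_le ht0 (by rw [hq1]; positivity) hpow
  -- translate back to specNorm
  have hN2 : specNorm (P * A) ^ 2 = ‖T (P * M * P)‖ := by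
    rw [← specNorm_mul_transpose, hBB]; rfl
  have hK2 : specNorm (P * M ^ q * A) ^ 2 = ‖T (P * M ^ t * P)‖ := by
    rw [← specNorm_mul_transpose, hCC]; rfl
  set N := specNorm (P * A) with hNdef
  set K := specNorm (P * M ^ q * A) with hKdef
  have hNnn : 0 ≤ N := by rw [hNdef, specNorm_eq]; exact norm_nonneg _
  have hKnn : 0 ≤ K := by rw [hKdef, specNorm_eq]; exact norm_nonneg _
  have hmain : N ^ 2 ≤ (K ^ 2) ^ ((1:ℝ)/(t:ℝ)) := by
    rw [hN2, hK2]; exact key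
  have hsplit : (K ^ 2) ^ ((1:ℝ)/(t:ℝ)) = (K ^ ((1:ℝ)/(t:ℝ))) ^ 2 := by
    rw [← Real.rpow_natCast K 2, ← Real.rpow_mul hKnn,
      ← Real.rpow_natCast (K ^ ((1:ℝ)/(t:ℝ))) 2, ← Real.rpow_mul hKnn]
    ring_nf
  have hfin : N ≤ K ^ ((1:ℝ)/(t:ℝ)) := by
    rw [hsplit] at hmain
    have := Real.sqrt_le_sqrt hmain
    rwa [Real.sqrt_sq hNnn, Real.sqrt_sq (Real.rpow_nonneg hKnn _)] at this
  have hcast : ((1:ℝ)/(t:ℝ)) = (1:ℝ) / (2 * (q:ℝ) + 1) := by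
    rw [htdef]; push_cast; ring_nf
  rwa [hcast] at hfin
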